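/- arXiv:1912.01210 — 2 statements merged into one kernel-verified Lean document; each statement's English description precedes it below -/
import Mathlib

section
/- Let D ≥ 1 and ξ, c, a > 0. For every n, consider a D-dimensional hypercubic lattice of N = n^D sites, each hosting a d-dimensional spin, with Hermitian Hamiltonian H and a stationary density matrix ρ (i.e., [ρ, H] = 0) satisfying exponential correlation decay: |tr(ρ L_i L'_{i'}) − tr(ρ L_i) tr(ρ L'_{i'})| ≤ ‖L_i‖ ‖L'_{i'}‖ · c · e^{−|i−i'|/ξ} for all local operators L_i, L'_{i'} at sites i, i'. Let A_i, B_i be local operators supported within distance r₀ = O(1) of site i with ‖A_i‖, ‖B_i‖ ≤ a, and set A = (1/N) Σ_i A_i, B = (1/N) Σ_i B_i. Then there is a constant C depending only on D, ξ, c, a, r₀ such that for all t ∈ ℝ, |tr(ρ A(t) B) − tr(ρ A) tr(ρ B)| ≤ C/N. -/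
open Matrix
open scoped ComplexOrder

/-- ℓ¹ distance between two lattice sites of `{0,…,n-1}^D`. -/
def latticeDist {D n : ℕ} (i j : Fin D → Fin n) : ℕ :=
  ∑ l, ((i l : ℤ) - (j l : ℤ)).natAbs

/-- A matrix on the `N`-fold tensor product `(ℂ^d)^{⊗N}` (indexed by functions
`site → Fin d`) acts trivially outside the set `S` of sites: its entries vanish unless the
two indices agree off `S`, and they only depend on the restrictions of the indices to `S`. -/
def SupportedOn {D n d : ℕ} (S : Set (Fin D → Fin n))
    (M : Matrix ((Fin D → Fin n) → Fin d) ((Fin D → Fin n) → Fin d) ℂ) : Prop :=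
  (∀ x y, M x y ≠ 0 → ∀ i ∉ S, x i = y i) ∧
  (∀ x y x' y', (∀ i ∈ S, x i = x' i) → (∀ i ∈ S, y i = y' i) →
    (∀ i ∉ S, x i = y i) → (∀ i ∉ S, x' i = y' i) → M x y = M x' y')

/-- Operator norm (ℓ²→ℓ² norm) of a matrix. -/
noncomputable def opNorm {ι : Type*} [Fintype ι] [DecidableEq ι] (M : Matrix ι ι ℂ) : ℝ :=
  ‖Matrix.toEuclideanCLM (𝕜 := ℂ) M‖

namespace NMTO

set_option linter.unusedSectionVars false

variable {ι : Type*} [Fintype ι] [DecidableEq ι]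

lemma opNorm_nonneg (M : Matrix ι ι ℂ) : 0 ≤ opNorm M := norm_nonneg _

open scoped Matrix.Norms.L2Operator in
lemma opNorm_eq_l2 (M : Matrix ι ι ℂ) : opNorm M = ‖M‖ := rfl

lemma opNorm_conjTranspose (M : Matrix ι ι ℂ) : opNorm Mᴴ = opNorm M := by
  rw [opNorm_eq_l2, opNorm_eq_l2]
  exact Matrix.l2_opNorm_conjTranspose M

lemma trace_mul_conjT (ρ M : Matrix ι ι ℂ) (hρ : ρᴴ = ρ) :
    (ρ * Mᴴ).trace = starRingEnd ℂ ((ρ * M).trace) := by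
  have h1 : ((ρ * Mᴴ)ᴴ).trace = star ((ρ * Mᴴ).trace) := Matrix.trace_conjTranspose _
  rw [Matrix.conjTranspose_mul, Matrix.conjTranspose_conjTranspose, hρ] at h1
  have h2 : (M * ρ).trace = (ρ * M).trace := Matrix.trace_mul_comm _ _
  rw [h2] at h1
  have := congrArg star h1
  rw [star_star] at this
  exact this.symm

/-- covariance expansion -/
lemma cov_expand (ρ F G : Matrix ι ι ℂ) (hρ1 : ρ.trace = 1) :
    (ρ * ((F - (ρ * F).trace • 1) * (G - (ρ * G).trace • 1))).trace
      = (ρ * (F * G)).trace - (ρ * F).trace * (ρ * G).trace := by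
  simp only [Matrix.sub_mul, Matrix.mul_sub, Matrix.mul_smul, Matrix.smul_mul,
    Matrix.mul_one, Matrix.one_mul, Matrix.trace_sub, Matrix.trace_smul, smul_smul,
    smul_eq_mul, hρ1, mul_one]
  ring_nf

lemma trace_factor (σ : Matrix ι ι ℂ) (hσ : σᴴ = σ) (P Q : Matrix ι ι ℂ) :
    ((σ * σ) * (P * Q)).trace
      = ∑ p : ι × ι, (starRingEnd ℂ) ((Pᴴ * σ) p.1 p.2) * ((Q * σ) p.1 p.2) := by
  have h2 : ((σ * σ) * (P * Q)).trace = ((σ * P) * (Q * σ)).trace := by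
    rw [show (σ * σ) * (P * Q) = σ * (σ * (P * Q)) from by rw [Matrix.mul_assoc],
      Matrix.trace_mul_comm σ (σ * (P * Q))]
    congr 1
    noncomm_ring
  have h3 : ∀ i j, (σ * P) i j = (starRingEnd ℂ) ((Pᴴ * σ) j i) := by
    intro i j
    simp only [Matrix.mul_apply, Matrix.conjTranspose_apply, map_sum]
    refine Finset.sum_congr rfl fun k _ => ?_
    rw [_root_.map_mul]
    rw [show (starRingEnd ℂ) (star (P k j)) = P k j from Complex.conj_conj _]
    have hki : (starRingEnd ℂ) (σ k i) = σ i k := by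
      conv_rhs => rw [← hσ]
      rfl
    rw [hki, mul_comm]
  have h4 : ((σ * P) * (Q * σ)).trace = ∑ i, ∑ j, (σ * P) i j * (Q * σ) j i := by
    simp [Matrix.trace, Matrix.diag, Matrix.mul_apply]
  rw [h2, h4, Fintype.sum_prod_type]
  rw [Finset.sum_comm]
  exact Finset.sum_congr rfl fun j _ => Finset.sum_congr rfl fun i _ => by rw [h3 i j]

open scoped MatrixOrder in
/-- Cauchy–Schwarz for the (possibly degenerate) sesquilinear form given by `ρ`. -/
lemma cs (ρ : Matrix ι ι ℂ) (hρ : ρ.PosSemidef) (X Y : Matrix ι ι ℂ) :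
    ‖(ρ * (X * Y)).trace‖ ^ 2
      ≤ ‖(ρ * (X * Xᴴ)).trace‖ * ‖(ρ * (Yᴴ * Y)).trace‖ := by
  obtain ⟨σ, hσSA, -, hσρ⟩ := CFC.exists_sqrt_of_isSelfAdjoint_of_quasispectrumRestricts
    (show IsSelfAdjoint ρ from hρ.1) (QuasispectrumRestricts.nnreal_of_nonneg hρ.nonneg)
  have hσH : σᴴ = σ := hσSA
  set M : Matrix ι ι ℂ := Xᴴ * σ with hM
  set N : Matrix ι ι ℂ := Y * σ with hN
  have e1 : (ρ * (X * Y)).trace = ∑ p : ι × ι, (starRingEnd ℂ) (M p.1 p.2) * (N p.1 p.2) := by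
    rw [← hσρ]; exact trace_factor σ hσH X Y
  have e2 : (ρ * (X * Xᴴ)).trace = ∑ p : ι × ι, (starRingEnd ℂ) (M p.1 p.2) * (M p.1 p.2) := by
    rw [← hσρ]; exact trace_factor σ hσH X Xᴴ
  have e3 : (ρ * (Yᴴ * Y)).trace = ∑ p : ι × ι, (starRingEnd ℂ) (N p.1 p.2) * (N p.1 p.2) := by
    rw [← hσρ]
    have := trace_factor σ hσH Yᴴ Y
    rwa [Matrix.conjTranspose_conjTranspose] at this
  have habs : ∀ (W : Matrix ι ι ℂ),
      ‖(∑ p : ι × ι, (starRingEnd ℂ) (W p.1 p.2) * (W p.1 p.2))‖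
        = ∑ p : ι × ι, ‖(W p.1 p.2)‖ ^ 2 := by
    intro W
    have : ∀ p : ι × ι, (starRingEnd ℂ) (W p.1 p.2) * (W p.1 p.2)
        = ((‖(W p.1 p.2)‖ ^ 2 : ℝ) : ℂ) := by
      intro p
      rw [mul_comm, Complex.mul_conj, Complex.sq_norm]
    rw [Finset.sum_congr rfl fun p _ => this p, ← Complex.ofReal_sum, Complex.norm_real, Real.norm_eq_abs,
      abs_of_nonneg (Finset.sum_nonneg fun p _ => sq_nonneg _)]
  have hb : ‖(ρ * (X * Y)).trace‖
      ≤ ∑ p : ι × ι, ‖(M p.1 p.2)‖ * ‖(N p.1 p.2)‖ := by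
    rw [e1]
    refine le_trans (norm_sum_le _ _) (le_of_eq ?_)
    exact Finset.sum_congr rfl fun p _ => by rw [norm_mul, Complex.norm_conj]
  calc ‖(ρ * (X * Y)).trace‖ ^ 2
      ≤ (∑ p : ι × ι, ‖(M p.1 p.2)‖ * ‖(N p.1 p.2)‖) ^ 2 := by
        exact pow_le_pow_left₀ (norm_nonneg _) hb 2
    _ ≤ (∑ p : ι × ι, ‖(M p.1 p.2)‖ ^ 2) * (∑ p : ι × ι, ‖(N p.1 p.2)‖ ^ 2) :=
        Finset.sum_mul_sq_le_sq_mul_sq _ _ _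
    _ = ‖(ρ * (X * Xᴴ)).trace‖ * ‖(ρ * (Yᴴ * Y)).trace‖ := by
        rw [e2, e3, habs M, habs N]

lemma commute_exp (ρ H : Matrix ι ι ℂ) (h : ρ * H = H * ρ) (s : ℂ) :
    Commute ρ (NormedSpace.exp (s • H)) := by
  have hc : Commute ρ H := h
  exact Commute.exp_right (hc.smul_right s)

lemma exp_mul_exp_neg (H : Matrix ι ι ℂ) (x : ℂ) :
    NormedSpace.exp (x • H) * NormedSpace.exp ((-x) • H) = 1 := by
  rw [← Matrix.exp_add_of_commute (x • H) ((-x) • H)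
    (((Commute.refl H).smul_left x).smul_right (-x))]
  rw [← add_smul, add_neg_cancel, zero_smul, NormedSpace.exp_zero]

lemma exp_smul_conjT (H : Matrix ι ι ℂ) (hH : H.IsHermitian) (x : ℂ) :
    (NormedSpace.exp (x • H))ᴴ = NormedSpace.exp ((starRingEnd ℂ x) • H) := by
  rw [← Matrix.exp_conjTranspose, Matrix.conjTranspose_smul, hH.eq]
  rfl

lemma trace_conj_inv (ρ U U' M : Matrix ι ι ℂ) (h1 : U' * U = 1) (h2 : U' * ρ = ρ * U') :
    (ρ * (U * M * U')).trace = (ρ * M).trace := by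
  calc (ρ * (U * M * U')).trace = ((U * M * U') * ρ).trace := Matrix.trace_mul_comm _ _
    _ = (U * (M * (U' * ρ))).trace := by rw [Matrix.mul_assoc, Matrix.mul_assoc]
    _ = ((M * (U' * ρ)) * U).trace := Matrix.trace_mul_comm _ _
    _ = (M * (ρ * (U' * U))).trace := by rw [h2, Matrix.mul_assoc, Matrix.mul_assoc]
    _ = (M * ρ).trace := by rw [h1, Matrix.mul_one]
    _ = (ρ * M).trace := Matrix.trace_mul_comm _ _

lemma cov_sum_bound {κ : Type*} [Fintype κ] (ρ : Matrix ι ι ℂ) (μ μ' : ℂ)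
    (f g : κ → Matrix ι ι ℂ) (h : κ → κ → ℝ)
    (hb : ∀ i i', ‖(ρ * (f i * g i')).trace
        - (ρ * f i).trace * (ρ * g i').trace‖ ≤ h i i') :
    ‖(ρ * ((μ • ∑ i, f i) * (μ' • ∑ i, g i))).trace
        - (ρ * (μ • ∑ i, f i)).trace * (ρ * (μ' • ∑ i, g i)).trace‖
      ≤ ‖μ‖ * ‖μ'‖ * ∑ i, ∑ i', h i i' := by
  have key : (ρ * ((μ • ∑ i, f i) * (μ' • ∑ i, g i))).trace
        - (ρ * (μ • ∑ i, f i)).trace * (ρ * (μ' • ∑ i, g i)).trace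
      = μ * μ' * ∑ i, ∑ i', ((ρ * (f i * g i')).trace
          - (ρ * f i).trace * (ρ * g i').trace) := by
    have hsub : (∑ i, ∑ i', ((ρ * (f i * g i')).trace - (ρ * f i).trace * (ρ * g i').trace))
        = (∑ i, ∑ i', (ρ * (f i * g i')).trace)
          - (∑ i, (ρ * f i).trace) * (∑ i', (ρ * g i').trace) := by
      rw [Finset.sum_mul_sum]
      simp only [Finset.sum_sub_distrib]
    have hFG : (∑ i, f i) * (∑ i', g i') = ∑ i, ∑ i', f i * g i' := Finset.sum_mul_sum _ _ _ _
    have t1 : (ρ * ((μ • ∑ i, f i) * (μ' • ∑ i, g i))).trace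
        = μ * μ' * ∑ i, ∑ i', (ρ * (f i * g i')).trace := by
      have e1 : (ρ * ((μ • ∑ i, f i) * (μ' • ∑ i, g i))).trace
          = μ * (μ' * (ρ * ((∑ i, f i) * (∑ i', g i'))).trace) := by
        simp only [Matrix.smul_mul, Matrix.mul_smul, Matrix.trace_smul, smul_eq_mul]
        ring
      rw [e1, hFG]
      simp only [Matrix.mul_sum, Matrix.trace_sum]
      ring
    have t2 : (ρ * (μ • ∑ i, f i)).trace = μ * ∑ i, (ρ * f i).trace := by
      simp only [Matrix.mul_smul, Matrix.trace_smul, Matrix.mul_sum, Matrix.trace_sum,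
        smul_eq_mul]
    have t3 : (ρ * (μ' • ∑ i, g i)).trace = μ' * ∑ i, (ρ * g i).trace := by
      simp only [Matrix.mul_smul, Matrix.trace_smul, Matrix.mul_sum, Matrix.trace_sum,
        smul_eq_mul]
    rw [t1, t2, t3, hsub]
    ring
  rw [key, norm_mul, norm_mul]
  gcongr ‖μ‖ * ‖μ'‖ * ?_
  refine le_trans (norm_sum_le _ _) (Finset.sum_le_sum fun i _ => ?_)
  exact le_trans (norm_sum_le _ _) (Finset.sum_le_sum fun i' _ => hb i i')

lemma geo_sum (q : ℝ) (hq0 : 0 ≤ q) (hq1 : q < 1) (m : ℕ) :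
    ∑ k ∈ Finset.range m, q ^ k ≤ 1 / (1 - q) := by
  have h1q : 0 < 1 - q := by linarith
  have e : ∑ k ∈ Finset.range m, q ^ k = (1 - q ^ m) / (1 - q) := by
    rw [geom_sum_eq (ne_of_lt hq1)]
    rw [← neg_div_neg_eq]
    ring_nf
  rw [e]
  gcongr
  nlinarith [pow_nonneg hq0 m]

lemma geo_one (q : ℝ) (hq0 : 0 ≤ q) (hq1 : q < 1) {n : ℕ} (i : Fin n) :
    (∑ j : Fin n, q ^ ((i : ℤ) - (j : ℤ)).natAbs) ≤ 2 / (1 - q) := by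
  have h1q : 0 < 1 - q := by linarith
  have hrange : (∑ j : Fin n, q ^ ((i : ℤ) - (j : ℤ)).natAbs)
      = ∑ j ∈ Finset.range n, q ^ ((i : ℤ) - (j : ℤ)).natAbs :=
    Fin.sum_univ_eq_sum_range (fun j => q ^ ((i : ℤ) - (j : ℤ)).natAbs) n
  have hsplit : ∑ j ∈ Finset.range n, q ^ ((i : ℤ) - (j : ℤ)).natAbs
      = (∑ j ∈ Finset.range (i + 1), q ^ ((i : ℤ) - (j : ℤ)).natAbs)
        + ∑ j ∈ Finset.Ico (i + 1 : ℕ) n, q ^ ((i : ℤ) - (j : ℤ)).natAbs := by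
    rw [Finset.range_eq_Ico, ← Finset.sum_Ico_consecutive _ (Nat.zero_le (i + 1)) i.isLt,
      ← Finset.range_eq_Ico]
  have hfirst : (∑ j ∈ Finset.range (i + 1), q ^ ((i : ℤ) - (j : ℤ)).natAbs) ≤ 1 / (1 - q) := by
    have e : ∀ j ∈ Finset.range (i + 1), q ^ ((i : ℤ) - (j : ℤ)).natAbs = q ^ ((i : ℕ) - j) := by
      intro j hj
      rw [Finset.mem_range] at hj
      congr 1
      omega
    rw [Finset.sum_congr rfl e]
    have := Finset.sum_range_reflect (fun k => q ^ k) (i + 1)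
    simp only [Nat.add_sub_cancel] at this
    rw [this]
    exact geo_sum q hq0 hq1 _
  have hsecond : (∑ j ∈ Finset.Ico (i + 1 : ℕ) n, q ^ ((i : ℤ) - (j : ℤ)).natAbs)
      ≤ 1 / (1 - q) := by
    rw [Finset.sum_Ico_eq_sum_range]
    refine le_trans (Finset.sum_le_sum (g := fun k => q ^ k) ?_) (geo_sum q hq0 hq1 _)
    intro k _
    have e : (((i : ℤ)) - ((i : ℕ) + 1 + k : ℕ)).natAbs = k + 1 := by omega
    rw [e, pow_succ]
    nlinarith [pow_nonneg hq0 k]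
  rw [hrange, hsplit]
  have : 2 / (1 - q) = 1 / (1 - q) + 1 / (1 - q) := by ring
  rw [this]
  exact add_le_add hfirst hsecond

lemma geo_multi (q : ℝ) (hq0 : 0 ≤ q) (hq1 : q < 1) {D n : ℕ} (i : Fin D → Fin n) :
    ∑ j : Fin D → Fin n, q ^ (latticeDist i j) ≤ (2 / (1 - q)) ^ D := by
  have e : ∀ j, q ^ latticeDist i j = ∏ l, q ^ ((i l : ℤ) - (j l : ℤ)).natAbs := by
    intro j
    rw [latticeDist, Finset.prod_pow_eq_pow_sum]
  rw [Finset.sum_congr rfl fun j _ => e j]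
  have hps := Fintype.prod_sum (fun (l : Fin D) (x : Fin n) => q ^ ((i l : ℤ) - (x : ℤ)).natAbs)
  rw [← hps]
  calc ∏ l, ∑ x : Fin n, q ^ ((i l : ℤ) - (x : ℤ)).natAbs
      ≤ ∏ _l : Fin D, 2 / (1 - q) := by
        refine Finset.prod_le_prod (fun l _ => Finset.sum_nonneg fun x _ => pow_nonneg hq0 _)
          (fun l _ => geo_one q hq0 hq1 (i l))
    _ = (2 / (1 - q)) ^ D := by
        rw [Finset.prod_const, Finset.card_univ, Fintype.card_fin]

lemma geo_exp (ξ : ℝ) (hξ : 0 < ξ) {D n : ℕ} (i : Fin D → Fin n) :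
    ∑ j : Fin D → Fin n, Real.exp (-(latticeDist i j : ℝ) / ξ)
      ≤ (2 / (1 - Real.exp (-1/ξ))) ^ D := by
  have hq1 : Real.exp (-1/ξ) < 1 := by
    rw [Real.exp_lt_one_iff, neg_div]
    have : 0 < 1/ξ := by positivity
    linarith
  have e : ∀ j, Real.exp (-(latticeDist i j : ℝ)/ξ) = (Real.exp (-1/ξ)) ^ latticeDist i j := by
    intro j
    rw [← Real.exp_nat_mul]
    congr 1
    ring
  rw [Finset.sum_congr rfl fun j _ => e j]
  exact geo_multi _ (Real.exp_pos _).le hq1 i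

lemma supportedOn_conjTranspose {D n d : ℕ} {S : Set (Fin D → Fin n)}
    {M : Matrix ((Fin D → Fin n) → Fin d) ((Fin D → Fin n) → Fin d) ℂ}
    (h : SupportedOn S M) : SupportedOn S Mᴴ := by
  constructor
  · intro x y hxy i hi
    have hM : M y x ≠ 0 := by
      intro h0
      apply hxy
      simp [Matrix.conjTranspose_apply, h0]
    exact (h.1 y x hM i hi).symm
  · intro x y x' y' hx hy hxy hx'y'
    simp only [Matrix.conjTranspose_apply]
    rw [h.2 y x y' x' hy hx (fun i hi => (hxy i hi).symm) (fun i hi => (hx'y' i hi).symm)]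

end NMTO

set_option maxHeartbeats 2000000 in
/-- For a stationary state `ρ` with exponential correlation decay
(correlation length `ξ`, constant `c`), the connected temporal correlator of the macroscopic
operators `A = (1/N) Σ_i A_i`, `B = (1/N) Σ_i B_i` is at most `C/N` at all times `t`, where
`C` depends only on `D, ξ, c, a, r₀`. -/
theorem no_macroscopic_temporal_order_exponential
    (D : ℕ) (hD : 1 ≤ D) (ξ c a : ℝ) (hξ : 0 < ξ) (hc : 0 < c) (ha : 0 < a) (r₀ : ℕ) :
    ∃ C : ℝ, 0 < C ∧
      ∀ (n d : ℕ), 1 ≤ n → 1 ≤ d →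
      ∀ (H ρ : Matrix ((Fin D → Fin n) → Fin d) ((Fin D → Fin n) → Fin d) ℂ),
        H.IsHermitian → ρ.PosSemidef → ρ.trace = 1 → ρ * H = H * ρ →
      -- exponential decay of spatial correlations in the state ρ
      (∀ (i i' : Fin D → Fin n),
        ∀ L L' : Matrix ((Fin D → Fin n) → Fin d) ((Fin D → Fin n) → Fin d) ℂ,
          SupportedOn {j | latticeDist i j ≤ r₀} L →
          SupportedOn {j | latticeDist i' j ≤ r₀} L' →
          ‖(ρ * (L * L')).trace - (ρ * L).trace * (ρ * L').trace‖ ≤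
            opNorm L * opNorm L' * c * Real.exp (-(latticeDist i i' : ℝ) / ξ)) →
      ∀ (A B : (Fin D → Fin n) →
          Matrix ((Fin D → Fin n) → Fin d) ((Fin D → Fin n) → Fin d) ℂ),
        (∀ i, SupportedOn {j | latticeDist i j ≤ r₀} (A i)) →
        (∀ i, SupportedOn {j | latticeDist i j ≤ r₀} (B i)) →
        (∀ i, opNorm (A i) ≤ a) →
        (∀ i, opNorm (B i) ≤ a) →
      ∀ t : ℝ,
        let Abar := ((n : ℂ) ^ D)⁻¹ • ∑ i, A i
        let Bbar := ((n : ℂ) ^ D)⁻¹ • ∑ i, B i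
        let At := NormedSpace.exp (((t : ℂ) * Complex.I) • H) * Abar *
          NormedSpace.exp ((-(t : ℂ) * Complex.I) • H)
        ‖(ρ * At * Bbar).trace - (ρ * Abar).trace * (ρ * Bbar).trace‖ ≤
          C / (n : ℝ) ^ D := by
  classical
  have hq0 : (0:ℝ) ≤ Real.exp (-1/ξ) := (Real.exp_pos _).le
  have hq1 : Real.exp (-1/ξ) < 1 := by
    rw [Real.exp_lt_one_iff, neg_div]
    have : 0 < 1/ξ := by positivity
    linarith
  have hK : 0 < 2 / (1 - Real.exp (-1/ξ)) := by
    have : 0 < 1 - Real.exp (-1/ξ) := by linarith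
    positivity
  set K : ℝ := 2 / (1 - Real.exp (-1/ξ)) with hKdef
  refine ⟨a * a * c * K ^ D, by positivity, ?_⟩
  intro n d hn hd H ρ hH hρ hρ1 hcomm hdecay A B hsA hsB hnA hnB t Abar Bbar At
  have hN : (0:ℝ) < (n:ℝ) ^ D := by
    have hn' : (0:ℝ) < (n:ℝ) := by exact_mod_cast hn
    positivity
  set ν : ℂ := ((n:ℂ) ^ D)⁻¹ with hν
  have hAbar : Abar = ν • ∑ i, A i := rfl
  have hBbar : Bbar = ν • ∑ i, B i := rfl
  set x : ℂ := (t:ℂ) * Complex.I with hx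
  set U := NormedSpace.exp (x • H) with hU
  set U' := NormedSpace.exp ((-x) • H) with hU'
  have hAt0 : At = U * Abar * U' := by
    show NormedSpace.exp (((t:ℂ) * Complex.I) • H) * Abar *
      NormedSpace.exp ((-(t:ℂ) * Complex.I) • H) = _
    rw [hU, hU', hx, neg_mul]
  have hU'U : U' * U = 1 := by
    have h := NMTO.exp_mul_exp_neg H (-x)
    rwa [neg_neg, ← hU, ← hU'] at h
  have hUU' : U * U' = 1 := by
    have h := NMTO.exp_mul_exp_neg H x
    rwa [← hU, ← hU'] at h
  have hρU' : U' * ρ = ρ * U' := by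
    have h := (NMTO.commute_exp ρ H hcomm (-x)).eq
    rw [← hU'] at h
    exact h.symm
  have hinv : ∀ M, (ρ * (U * M * U')).trace = (ρ * M).trace :=
    fun M => NMTO.trace_conj_inv ρ U U' M hU'U hρU'
  have hstat : (ρ * At).trace = (ρ * Abar).trace := by
    rw [hAt0]; exact hinv Abar
  -- rewrite the correlator
  have e0 := NMTO.cov_expand ρ At Bbar hρ1
  rw [hstat] at e0
  rw [Matrix.mul_assoc, ← e0]
  set X := At - (ρ * Abar).trace • (1 : Matrix ((Fin D → Fin n) → Fin d) ((Fin D → Fin n) → Fin d) ℂ) with hX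
  set Y := Bbar - (ρ * Bbar).trace • (1 : Matrix ((Fin D → Fin n) → Fin d) ((Fin D → Fin n) → Fin d) ℂ) with hY
  have hCS := NMTO.cs ρ hρ X Y
  -- conjugation invariance for X * Xᴴ
  have hδ : X = U * (Abar - (ρ * Abar).trace • 1) * U' := by
    have h1 : U * (Abar - (ρ * Abar).trace • 1) * U'
        = U * Abar * U' - (ρ * Abar).trace • (U * U') := by
      rw [Matrix.mul_sub, Matrix.sub_mul]
      congr 1
      rw [Matrix.mul_smul, Matrix.mul_one, Matrix.smul_mul]
    rw [hX, hAt0, h1, hUU']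
  have hUH : Uᴴ = U' := by
    rw [hU, NMTO.exp_smul_conjT H hH x, hU']
    congr 2
    rw [hx]
    simp [Complex.ext_iff]
  have hU'H : U'ᴴ = U := by
    rw [hU', NMTO.exp_smul_conjT H hH (-x), hU]
    congr 2
    rw [hx]
    simp [Complex.ext_iff]
  have hXH : Xᴴ = U * (Abar - (ρ * Abar).trace • 1)ᴴ * U' := by
    rw [hδ, Matrix.conjTranspose_mul, Matrix.conjTranspose_mul, hUH, hU'H, ← Matrix.mul_assoc]
  have hXXH : X * Xᴴ = U * ((Abar - (ρ * Abar).trace • 1) * (Abar - (ρ * Abar).trace • 1)ᴴ) * U' := by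
    rw [hXH, hδ]
    have h1 : U * (Abar - (ρ * Abar).trace • 1) * U' * (U * (Abar - (ρ * Abar).trace • 1)ᴴ * U')
        = U * (Abar - (ρ * Abar).trace • 1) * (U' * U) * ((Abar - (ρ * Abar).trace • 1)ᴴ * U') := by
      noncomm_ring
    rw [h1, hU'U, Matrix.mul_one]
    noncomm_ring
  have hXtrace : (ρ * (X * Xᴴ)).trace
      = (ρ * ((Abar - (ρ * Abar).trace • 1) * (Abar - (ρ * Abar).trace • 1)ᴴ)).trace := by
    rw [hXXH]; exact hinv _
  -- identify conjugate transposes of the fluctuation operators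
  have hstarA : (Abar - (ρ * Abar).trace • 1)ᴴ = Abarᴴ - (ρ * Abarᴴ).trace • 1 := by
    simp only [Matrix.conjTranspose_sub, Matrix.conjTranspose_smul, Matrix.conjTranspose_one,
      NMTO.trace_mul_conjT ρ Abar hρ.1]
    rfl
  have hstarB : (Bbar - (ρ * Bbar).trace • 1)ᴴ = Bbarᴴ - (ρ * Bbarᴴ).trace • 1 := by
    simp only [Matrix.conjTranspose_sub, Matrix.conjTranspose_smul, Matrix.conjTranspose_one,
      NMTO.trace_mul_conjT ρ Bbar hρ.1]
    rfl
  have covA := NMTO.cov_expand ρ Abar Abarᴴ hρ1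
  rw [← hstarA] at covA
  have covB := NMTO.cov_expand ρ Bbarᴴ Bbar hρ1
  rw [← hstarB] at covB
  -- sums of conjugate transposes
  have hνstar : star ν = ν := by
    rw [hν]
    simp
  have hAbarH : Abarᴴ = ν • ∑ i, (A i)ᴴ := by
    rw [hAbar, Matrix.conjTranspose_smul, Matrix.conjTranspose_sum, hνstar]
  have hBbarH : Bbarᴴ = ν • ∑ i, (B i)ᴴ := by
    rw [hBbar, Matrix.conjTranspose_smul, Matrix.conjTranspose_sum, hνstar]
  -- decay bounds for individual covariances
  have hbA : ∀ i i', ‖(ρ * (A i * (A i')ᴴ)).trace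
      - (ρ * A i).trace * (ρ * (A i')ᴴ).trace‖
      ≤ a * a * c * Real.exp (-(latticeDist i i' : ℝ)/ξ) := by
    intro i i'
    refine le_trans (hdecay i i' (A i) ((A i')ᴴ) (hsA i)
      (NMTO.supportedOn_conjTranspose (hsA i'))) ?_
    rw [NMTO.opNorm_conjTranspose]
    have h1 : opNorm (A i) * opNorm (A i') ≤ a * a :=
      mul_le_mul (hnA i) (hnA i') (NMTO.opNorm_nonneg _) ha.le
    exact mul_le_mul_of_nonneg_right (mul_le_mul_of_nonneg_right h1 hc.le)
      (Real.exp_pos _).le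
  have hbB : ∀ i i', ‖(ρ * ((B i)ᴴ * B i')).trace
      - (ρ * (B i)ᴴ).trace * (ρ * B i').trace‖
      ≤ a * a * c * Real.exp (-(latticeDist i i' : ℝ)/ξ) := by
    intro i i'
    refine le_trans (hdecay i i' ((B i)ᴴ) (B i')
      (NMTO.supportedOn_conjTranspose (hsB i)) (hsB i')) ?_
    rw [NMTO.opNorm_conjTranspose]
    have h1 : opNorm (B i) * opNorm (B i') ≤ a * a :=
      mul_le_mul (hnB i) (hnB i') (NMTO.opNorm_nonneg _) ha.le
    exact mul_le_mul_of_nonneg_right (mul_le_mul_of_nonneg_right h1 hc.le)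
      (Real.exp_pos _).le
  -- geometric sum bound
  have hsum : ∑ i : Fin D → Fin n, ∑ i' : Fin D → Fin n,
      a * a * c * Real.exp (-(latticeDist i i' : ℝ)/ξ)
      ≤ a * a * c * ((n:ℝ) ^ D * K ^ D) := by
    have inner : ∀ i : Fin D → Fin n,
        ∑ i' : Fin D → Fin n, Real.exp (-(latticeDist i i' : ℝ)/ξ) ≤ K ^ D :=
      fun i => NMTO.geo_exp ξ hξ i
    calc ∑ i : Fin D → Fin n, ∑ i' : Fin D → Fin n,
          a * a * c * Real.exp (-(latticeDist i i' : ℝ)/ξ)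
        = a * a * c * ∑ i : Fin D → Fin n, ∑ i' : Fin D → Fin n,
            Real.exp (-(latticeDist i i' : ℝ)/ξ) := by
          rw [Finset.mul_sum]
          exact Finset.sum_congr rfl fun i _ => by rw [Finset.mul_sum]
      _ ≤ a * a * c * ∑ _i : Fin D → Fin n, K ^ D := by
          refine mul_le_mul_of_nonneg_left (Finset.sum_le_sum fun i _ => inner i) (by positivity)
      _ = a * a * c * ((n:ℝ) ^ D * K ^ D) := by
          rw [Finset.sum_const, Finset.card_univ, nsmul_eq_mul]
          congr 2
          rw [Fintype.card_fun, Fintype.card_fin, Fintype.card_fin]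
          push_cast
          ring
  have hν_abs : ‖ν‖ = ((n:ℝ) ^ D)⁻¹ := by
    rw [hν]
    rw [norm_inv, norm_pow, Complex.norm_natCast]
  -- bound for the X part
  have hXbound : ‖(ρ * (X * Xᴴ)).trace‖ ≤ a * a * c * K ^ D / (n:ℝ) ^ D := by
    have hcsb := NMTO.cov_sum_bound ρ ν ν A (fun i' => (A i')ᴴ) _ hbA
    rw [← hAbar, ← hAbarH] at hcsb
    rw [hXtrace, covA]
    refine le_trans hcsb ?_
    rw [hν_abs]
    refine le_trans (mul_le_mul_of_nonneg_left hsum (by positivity)) (le_of_eq ?_)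
    field_simp
  have hYbound : ‖(ρ * (Yᴴ * Y)).trace‖ ≤ a * a * c * K ^ D / (n:ℝ) ^ D := by
    have hcsb := NMTO.cov_sum_bound ρ ν ν (fun i => (B i)ᴴ) B _ hbB
    rw [← hBbar, ← hBbarH] at hcsb
    have hYH : Yᴴ = Bbarᴴ - (ρ * Bbarᴴ).trace • 1 := by
      rw [hY]; exact hstarB
    have : (ρ * (Yᴴ * Y)).trace
        = (ρ * (Bbarᴴ * Bbar)).trace - (ρ * Bbarᴴ).trace * (ρ * Bbar).trace := by
      rw [hYH, hY]
      rw [← covB, hstarB]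
    rw [this]
    refine le_trans hcsb ?_
    rw [hν_abs]
    refine le_trans (mul_le_mul_of_nonneg_left hsum (by positivity)) (le_of_eq ?_)
    field_simp
  -- finish
  have hCN : (0:ℝ) ≤ a * a * c * K ^ D / (n:ℝ) ^ D := by positivity
  have h2 : ‖(ρ * (X * Y)).trace‖ ^ 2 ≤ (a * a * c * K ^ D / (n:ℝ) ^ D) ^ 2 := by
    refine le_trans hCS ?_
    rw [sq]
    exact mul_le_mul hXbound hYbound (norm_nonneg _) hCN
  calc ‖(ρ * (X * Y)).trace‖
      = Real.sqrt (‖(ρ * (X * Y)).trace‖ ^ 2) :=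
        (Real.sqrt_sq (norm_nonneg _)).symm
    _ ≤ Real.sqrt ((a * a * c * K ^ D / (n:ℝ) ^ D) ^ 2) := Real.sqrt_le_sqrt h2
    _ = a * a * c * K ^ D / (n:ℝ) ^ D := Real.sqrt_sq hCN
end

section
/- Let σ be a traceless Hermitian d×d matrix with σ ≠ 0, and for each of N spins let σ_i denote σ acting on the i-th tensor factor of (ℂ^d)^{⊗N}. Let H = Σ_{i=1}^N σ_i, let A = B = H/N, and let ρ = I / tr(I) = I / d^N be the infinite-temperature state. Then for every t ∈ ℝ, tr(ρ A(t) B) = tr(H²)/(N² d^N) = tr(σ²)/(d N). In particular, since tr(ρ A) = tr(ρ B) = 0, the connected temporal correlator tr(ρ A(t) B) − tr(ρ A) tr(ρ B) equals the positive constant tr(σ²)/(dN) = Θ(1/N) at all times, so the O(1/N) bound of the main theorem (the case α > D) is tight. -/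
open Matrix

/-- The single-site operator `σ` acting on the `i`-th tensor factor of `(ℂ^d)^{⊗N}`:
`σ_i = I^{⊗(i-1)} ⊗ σ ⊗ I^{⊗(N-i)}`. -/
def siteOp {N d : ℕ} (i : Fin N) (σ : Matrix (Fin d) (Fin d) ℂ) :
    Matrix (Fin N → Fin d) (Fin N → Fin d) ℂ :=
  fun x y => ∏ j, if j = i then σ (x j) (y j) else (if x j = y j then (1 : ℂ) else 0)

lemma sum_pi_prod {N d : ℕ} (g : Fin N → Fin d → ℂ) :
    ∑ y : Fin N → Fin d, ∏ k, g k (y k) = ∏ k, ∑ b, g k b := by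
  rw [Finset.prod_univ_sum, ← Fintype.piFinset_univ]

lemma siteOp_apply {N d : ℕ} (i : Fin N) (σ : Matrix (Fin d) (Fin d) ℂ)
    (x y : Fin N → Fin d) :
    siteOp i σ x y = ∏ k, (if k = i then σ else 1) (x k) (y k) := by
  simp only [siteOp]
  exact Finset.prod_congr rfl fun k _ => by
    by_cases h : k = i <;> simp [h, Matrix.one_apply]

set_option maxHeartbeats 1000000 in
lemma trace_siteOp_mul {N d : ℕ} (i j : Fin N) (σ τ : Matrix (Fin d) (Fin d) ℂ) :
    (siteOp i σ * siteOp j τ).trace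
      = ∏ k, (((if k = i then σ else 1) * (if k = j then τ else 1)).trace) := by
  have h1 : (siteOp i σ * siteOp j τ).trace
      = ∑ x : Fin N → Fin d, ∑ y : Fin N → Fin d,
          ∏ k, ((if k = i then σ else 1) (x k) (y k) *
                (if k = j then τ else 1) (y k) (x k)) := by
    simp only [Matrix.trace, Matrix.diag, Matrix.mul_apply, siteOp_apply,
      Finset.prod_mul_distrib]
  rw [h1]
  have h2 : ∀ x : Fin N → Fin d,
      (∑ y : Fin N → Fin d, ∏ k, ((if k = i then σ else 1) (x k) (y k) *
            (if k = j then τ else 1) (y k) (x k)))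
      = ∏ k, ∑ b, ((if k = i then σ else 1) (x k) b *
            (if k = j then τ else 1) b (x k)) := fun x =>
    sum_pi_prod (fun k b => (if k = i then σ else 1) (x k) b *
      (if k = j then τ else 1) b (x k))
  simp only [h2]
  rw [sum_pi_prod (fun k a => ∑ b, ((if k = i then σ else 1) a b *
        (if k = j then τ else 1) b a))]
  exact Finset.prod_congr rfl fun k _ => by
    simp [Matrix.trace, Matrix.diag, Matrix.mul_apply]

lemma trace_siteOp {N d : ℕ} (i : Fin N) (σ : Matrix (Fin d) (Fin d) ℂ) :
    (siteOp i σ).trace = ∏ k, ((if k = i then σ else 1) : Matrix (Fin d) (Fin d) ℂ).trace := by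
  have h1 : (siteOp i σ).trace
      = ∑ x : Fin N → Fin d, ∏ k, (if k = i then σ else 1) (x k) (x k) := by
    simp only [Matrix.trace, Matrix.diag, siteOp_apply]
  rw [h1, sum_pi_prod (fun k a => (if k = i then σ else 1) a a)]
  exact Finset.prod_congr rfl fun k _ => by simp [Matrix.trace, Matrix.diag]

/-- Tightness of the `O(1/N)` bound: for a traceless Hermitian `σ ≠ 0`,
`H = Σ_i σ_i`, `A = B = H/N`, and the infinite-temperature state `ρ = I/d^N`, the connected
temporal correlator satisfies `tr(ρ A(t) B) = tr(H²)/(N² d^N) = tr(σ²)/(d N)` for all `t`,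
`tr(ρ A) = 0`, and `tr(σ²) > 0`, so the correlator is a positive constant `Θ(1/N)`. -/
theorem infinite_temperature_correlator_tight
    (N d : ℕ) (hN : 1 ≤ N) (hd : 1 ≤ d)
    (σ : Matrix (Fin d) (Fin d) ℂ) (hσherm : σ.IsHermitian) (hσtr : σ.trace = 0)
    (hσne : σ ≠ 0) :
    let H : Matrix (Fin N → Fin d) (Fin N → Fin d) ℂ := ∑ i, siteOp i σ
    let A := ((N : ℂ))⁻¹ • H
    let ρ : Matrix (Fin N → Fin d) (Fin N → Fin d) ℂ := ((d : ℂ) ^ N)⁻¹ • 1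
    (∀ t : ℝ,
      let At := NormedSpace.exp (((t : ℂ) * Complex.I) • H) * A *
        NormedSpace.exp ((-(t : ℂ) * Complex.I) • H)
      (ρ * At * A).trace = (H * H).trace / ((N : ℂ) ^ 2 * (d : ℂ) ^ N) ∧
      (ρ * At * A).trace = (σ * σ).trace / ((d : ℂ) * (N : ℂ))) ∧
    (ρ * A).trace = 0 ∧
    0 < ((σ * σ).trace).re := by
  intro H A ρ
  have hNne : (N : ℂ) ≠ 0 := Nat.cast_ne_zero.mpr (by omega)
  have hdne : (d : ℂ) ≠ 0 := Nat.cast_ne_zero.mpr (by omega)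
  -- trace of H² in terms of trace of σ²
  have htrpair : ∀ i j : Fin N, (siteOp i σ * siteOp j σ).trace =
      if i = j then (σ * σ).trace * (d : ℂ) ^ (N - 1) else 0 := by
    intro i j
    rw [trace_siteOp_mul]
    by_cases hij : i = j
    · subst hij
      simp only [if_pos rfl]
      have hfac : ∀ k : Fin N, (((if k = i then σ else 1) : Matrix (Fin d) (Fin d) ℂ) *
          (if k = i then σ else 1)).trace = if k = i then (σ * σ).trace else (d : ℂ) := by
        intro k; by_cases h : k = i <;> simp [h, Matrix.trace_one]
      simp only [hfac]
      rw [← Finset.mul_prod_erase _ _ (Finset.mem_univ i), if_pos rfl]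
      congr 1
      rw [Finset.prod_congr rfl (fun k hk => if_neg (Finset.ne_of_mem_erase hk)),
        Finset.prod_const, Finset.card_erase_of_mem (Finset.mem_univ i),
        Finset.card_univ, Fintype.card_fin]
    · rw [if_neg hij]
      refine Finset.prod_eq_zero (Finset.mem_univ i) ?_
      simp [hij, hσtr]
  have htrH2 : (H * H).trace = (N : ℂ) * ((σ * σ).trace * (d : ℂ) ^ (N - 1)) := by
    show ((∑ i, siteOp i σ) * ∑ j, siteOp j σ).trace = _
    rw [Finset.sum_mul_sum, Matrix.trace_sum]
    simp only [Matrix.trace_sum, htrpair]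
    simp [Finset.sum_ite_eq, Finset.mul_sum]
  have htrH : H.trace = 0 := by
    show (∑ i, siteOp i σ).trace = 0
    rw [Matrix.trace_sum]
    refine Finset.sum_eq_zero fun i _ => ?_
    rw [trace_siteOp]
    exact Finset.prod_eq_zero (Finset.mem_univ i) (by simp [hσtr])
  have hdpow : (d : ℂ) ^ N = (d : ℂ) ^ (N - 1) * (d : ℂ) := by
    rw [← pow_succ]; congr 1; omega
  refine ⟨?_, ?_, ?_⟩
  · intro t At
    -- At = A since A commutes with H
    have hAt : At = A := by
      show NormedSpace.exp (((t : ℂ) * Complex.I) • H) * A *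
        NormedSpace.exp ((-(t : ℂ) * Complex.I) • H) = A
      have hc : Commute (((t : ℂ) * Complex.I) • H) A :=
        ((Commute.refl H).smul_left _).smul_right _
      rw [hc.exp_left.eq, mul_assoc]
      have : NormedSpace.exp (((t : ℂ) * Complex.I) • H) *
          NormedSpace.exp ((-(t : ℂ) * Complex.I) • H) = 1 := by
        rw [← Matrix.exp_add_of_commute _ _
          (((Commute.refl H).smul_left _).smul_right _)]
        have : ((t : ℂ) * Complex.I) • H + (-(t : ℂ) * Complex.I) • H = 0 := by
          rw [← add_smul]; ring_nf; simp
        rw [this, NormedSpace.exp_zero]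
      rw [this, mul_one]
    rw [hAt]
    have hval : (ρ * A * A).trace =
        ((d : ℂ) ^ N)⁻¹ * ((N : ℂ)⁻¹ * ((N : ℂ)⁻¹ * (H * H).trace)) := by
      show ((((d : ℂ) ^ N)⁻¹ • (1 : Matrix (Fin N → Fin d) (Fin N → Fin d) ℂ)) *
        ((N : ℂ)⁻¹ • H) * ((N : ℂ)⁻¹ • H)).trace = _
      simp [Matrix.smul_mul, Matrix.mul_smul, Matrix.trace_smul, mul_assoc, smul_eq_mul]
      ring
    constructor
    · rw [hval]; ring
    · rw [hval, htrH2, hdpow]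
      have hdp : (d : ℂ) ^ (N - 1) ≠ 0 := pow_ne_zero _ hdne
      field_simp
  · show ((((d : ℂ) ^ N)⁻¹ • (1 : Matrix (Fin N → Fin d) (Fin N → Fin d) ℂ)) *
      ((N : ℂ)⁻¹ • H)).trace = 0
    simp [Matrix.smul_mul, Matrix.mul_smul, Matrix.trace_smul, smul_eq_mul, htrH]
  · have key : ((σ * σ).trace).re = ∑ a, ∑ b, Complex.normSq (σ a b) := by
      have h1 : (σ * σ).trace = ∑ a, ∑ b, (Complex.normSq (σ a b) : ℂ) := by
        simp only [Matrix.trace, Matrix.diag, Matrix.mul_apply]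
        refine Finset.sum_congr rfl fun a _ => Finset.sum_congr rfl fun b _ => ?_
        rw [show σ b a = star (σ a b) from (hσherm.apply b a).symm]
        rw [Complex.star_def, Complex.mul_conj]
      rw [h1]
      simp
    rw [key, ← Finset.sum_product']
    have hex : ∃ p : (Fin d) × (Fin d), σ p.1 p.2 ≠ 0 := by
      by_contra h
      push_neg at h
      exact hσne (Matrix.ext fun a b => h (a, b))
    obtain ⟨p, hp⟩ := hex
    refine Finset.sum_pos' (fun q _ => Complex.normSq_nonneg _) ⟨p, Finset.mem_univ _, ?_⟩
    exact Complex.normSq_pos.mpr hp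
end
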